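/- The generating function for 01-partitions is ∑_{n≥0} j(n) q^n = ∏_{k≥1} (1+q^k)/(1-q^k) as formal power series. -/

import Mathlib

/-- A 01-partition: a finite sequence of non-negative integers whose last entry is ≥ 1,
satisfying the weakly decreasing conditions `n_j ≥ n_{j+1} - 1` and `n_j ≥ n_{j+2}`. -/
def Is01 (l : List ℕ) : Prop :=
  (∀ i, i + 1 < l.length → l[i + 1]! ≤ l[i]! + 1) ∧
  (∀ i, i + 2 < l.length → l[i + 2]! ≤ l[i]!) ∧
  (l ≠ [] → 1 ≤ l.getLast!)

/-- `j01 n` is the number of 01-partitions of `n` (with `j01 0 = 1`, the empty sequence). -/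
noncomputable def j01 (n : ℕ) : ℕ := Nat.card {l : List ℕ // Is01 l ∧ l.sum = n}


namespace Jag

/-- chain conditions, reversed orientation -/
def CH (r : List ℕ) : Prop :=
  (∀ i, i + 1 < r.length → r[i]! ≤ r[i + 1]! + 1) ∧
  (∀ i, i + 2 < r.length → r[i]! ≤ r[i + 2]!)

/-- reversed jagged partition -/
def RJ (r : List ℕ) : Prop := CH r ∧ (r ≠ [] → 1 ≤ r[0]!)

lemma getElem!_reverse (l : List ℕ) (i : ℕ) (h : i < l.length) :
    l.reverse[i]! = l[l.length - 1 - i]! := by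
  rw [getElem!_pos _ _ (by simpa using h), getElem!_pos _ _ (by omega),
    List.getElem_reverse]

lemma is01_iff (l : List ℕ) : Is01 l ↔ RJ l.reverse := by
  constructor
  · rintro ⟨h1, h2, h3⟩
    refine ⟨⟨?_, ?_⟩, ?_⟩
    · intro i hi
      simp only [List.length_reverse] at hi
      rw [getElem!_reverse _ _ (by omega), getElem!_reverse _ _ (by omega)]
      have := h1 (l.length - 2 - i) (by omega)
      have e : l.length - 2 - i + 1 = l.length - 1 - i := by omega
      rw [e] at this
      have e2 : l.length - 1 - (i+1) = l.length - 2 - i := by omega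
      rw [e2]; exact this
    · intro i hi
      simp only [List.length_reverse] at hi
      rw [getElem!_reverse _ _ (by omega), getElem!_reverse _ _ (by omega)]
      have := h2 (l.length - 3 - i) (by omega)
      have e : l.length - 3 - i + 2 = l.length - 1 - i := by omega
      rw [e] at this
      have e2 : l.length - 1 - (i+2) = l.length - 3 - i := by omega
      rw [e2]; exact this
    · intro hne
      have hl : l ≠ [] := by simpa using fun h => hne (by simp [h])
      have hlen : 0 < l.length := List.length_pos_iff.2 hl
      rw [getElem!_reverse _ _ (by omega)]
      have := h3 hl
      rw [List.getLast!_eq_getElem!] at this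
      simpa using this
  · rintro ⟨⟨h1, h2⟩, h3⟩
    simp only [List.length_reverse] at h1 h2
    refine ⟨?_, ?_, ?_⟩
    · intro j hj
      have := h1 (l.length - 2 - j) (by omega)
      rw [getElem!_reverse _ _ (by omega), getElem!_reverse _ _ (by omega)] at this
      have e : l.length - 1 - (l.length - 2 - j) = j + 1 := by omega
      have e2 : l.length - 1 - (l.length - 2 - j + 1) = j := by omega
      rwa [e, e2] at this
    · intro j hj
      have := h2 (l.length - 3 - j) (by omega)
      rw [getElem!_reverse _ _ (by omega), getElem!_reverse _ _ (by omega)] at this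
      have e : l.length - 1 - (l.length - 3 - j) = j + 2 := by omega
      have e2 : l.length - 1 - (l.length - 3 - j + 2) = j := by omega
      rwa [e, e2] at this
    · intro hl
      have hlen : 0 < l.length := List.length_pos_iff.2 hl
      have := h3 (by simpa using hl)
      rw [getElem!_reverse _ _ (by omega)] at this
      rw [List.getLast!_eq_getElem!]
      simpa using this

lemma CH_nil : CH ([] : List ℕ) := ⟨by simp, by simp⟩

lemma CH_cons {a : ℕ} {r : List ℕ} :
    CH (a :: r) ↔ CH r ∧ (0 < r.length → a ≤ r[0]! + 1) ∧ (1 < r.length → a ≤ r[1]!) := by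
  constructor
  · rintro ⟨h1, h2⟩
    refine ⟨⟨fun i hi => ?_, fun i hi => ?_⟩, fun h => ?_, fun h => ?_⟩
    · have := h1 (i+1) (by simpa using hi)
      simpa using this
    · have := h2 (i+1) (by simp; omega)
      simpa using this
    · have := h1 0 (by simp; omega)
      simpa using this
    · have := h2 0 (by simp; omega)
      simpa using this
  · rintro ⟨⟨h1, h2⟩, h3, h4⟩
    constructor
    · rintro (_ | i) hi
      · simpa using h3 (by simp at hi; omega)
      · simp only [List.getElem!_cons_succ]
        exact h1 i (by simp at hi; omega)
    · rintro (_ | i) hi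
      · simpa using h4 (by simp at hi; omega)
      · simp only [List.getElem!_cons_succ]
        exact h2 i (by simp at hi; omega)

lemma getElem!_map_add1 (l : List ℕ) (i : ℕ) (h : i < l.length) :
    (l.map (· + 1))[i]! = l[i]! + 1 := by
  rw [getElem!_pos (l.map (· + 1)) i (by simpa using h), getElem!_pos l i h]
  simp

def pairs : ℕ → List ℕ
  | 0 => []
  | t + 1 => 1 :: 0 :: pairs t

def rstep (t k : ℕ) (l : List ℕ) : List ℕ :=
  pairs t ++ List.replicate k 1 ++ l.map (· + 1)

def rbuild (T K : ℕ → ℕ) : ℕ → List ℕ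
  | 0 => []
  | D + 1 => rstep (T 0) (K 0) (rbuild (fun d => T (d + 1)) (fun d => K (d + 1)) D)

lemma CH_map_add1 {l : List ℕ} (h : CH l) : CH (l.map (· + 1)) := by
  obtain ⟨h1, h2⟩ := h
  constructor
  · intro i hi
    simp only [List.length_map] at hi
    rw [getElem!_map_add1 _ _ (by omega), getElem!_map_add1 _ _ (by omega)]
    have := h1 i (by omega); omega
  · intro i hi
    simp only [List.length_map] at hi
    rw [getElem!_map_add1 _ _ (by omega), getElem!_map_add1 _ _ (by omega)]
    have := h2 i (by omega); omega

lemma getElem!_pos_of_all {r : List ℕ} (hall : ∀ x ∈ r, 1 ≤ x) {i : ℕ} (h : i < r.length) :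
    1 ≤ r[i]! := by
  rw [getElem!_pos r i h]
  exact hall _ (List.getElem_mem h)

lemma CH_ones_append {M : List ℕ} (h : CH M) (hall : ∀ x ∈ M, 1 ≤ x) (k : ℕ) :
    CH (List.replicate k 1 ++ M) ∧ (∀ x ∈ List.replicate k 1 ++ M, 1 ≤ x) := by
  induction k with
  | zero => simpa using ⟨h, hall⟩
  | succ k ih =>
    obtain ⟨ihc, iha⟩ := ih
    refine ⟨?_, ?_⟩
    · rw [List.replicate_succ, List.cons_append, CH_cons]
      exact ⟨ihc, fun _ => by omega, fun hh => by
        have := getElem!_pos_of_all iha (i := 1) hh; omega⟩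
    · intro x hx
      rw [List.replicate_succ, List.cons_append] at hx
      rcases List.mem_cons.mp hx with h | h
      · omega
      · exact iha _ h

lemma RJ_pairs_append {M : List ℕ} (h : CH M) (hhead : M ≠ [] → 1 ≤ M[0]!) (t : ℕ) :
    CH (pairs t ++ M) ∧ (pairs t ++ M ≠ [] → 1 ≤ (pairs t ++ M)[0]!) := by
  induction t with
  | zero => exact ⟨h, hhead⟩
  | succ t ih =>
    obtain ⟨ihc, ihh⟩ := ih
    have hc : CH (1 :: 0 :: (pairs t ++ M)) := by
      rw [CH_cons, CH_cons]
      refine ⟨⟨ihc, fun _ => by omega, fun hh => by simp⟩, fun _ => by simp, fun hh => ?_⟩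
      simp only [List.getElem!_cons_succ]
      apply ihh
      intro he
      rw [he] at hh; simp at hh
    exact ⟨by simpa [pairs] using hc, by simp [pairs]⟩

lemma RJ_rstep {l : List ℕ} (h : RJ l) (t k : ℕ) : RJ (rstep t k l) := by
  obtain ⟨hc, _⟩ := h
  have hmap : CH (l.map (· + 1)) := CH_map_add1 hc
  have hmall : ∀ x ∈ l.map (· + 1), 1 ≤ x := by simp
  obtain ⟨h1, h2⟩ := CH_ones_append hmap hmall k
  have h0 : (List.replicate k 1 ++ l.map (· + 1)) ≠ [] →
      1 ≤ (List.replicate k 1 ++ l.map (· + 1))[0]! := fun hne =>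
    getElem!_pos_of_all h2 (List.length_pos_iff.mpr hne)
  obtain ⟨g1, g2⟩ := RJ_pairs_append h1 h0 t
  exact ⟨by simpa [rstep] using g1, by simpa [rstep] using g2⟩

lemma RJ_rbuild (T K : ℕ → ℕ) (D : ℕ) : RJ (rbuild T K D) := by
  induction D generalizing T K with
  | zero => exact ⟨CH_nil, by simp [rbuild]⟩
  | succ D ih => exact RJ_rstep (ih _ _) _ _

lemma sum_map_add1 (l : List ℕ) : (l.map (· + 1)).sum = l.sum + l.length := by
  induction l with
  | nil => simp
  | cons a l ih => simp [ih]; omega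

lemma pairs_sum (t : ℕ) : (pairs t).sum = t := by
  induction t with
  | zero => simp [pairs]
  | succ t ih => simp [pairs, ih]; omega

lemma pairs_length (t : ℕ) : (pairs t).length = 2 * t := by
  induction t with
  | zero => simp [pairs]
  | succ t ih => simp [pairs, ih]; omega

lemma rstep_sum (t k : ℕ) (l : List ℕ) :
    (rstep t k l).sum = l.sum + l.length + k + t := by
  simp [rstep, pairs_sum, sum_map_add1]; omega

lemma rstep_length (t k : ℕ) (l : List ℕ) :
    (rstep t k l).length = l.length + k + 2 * t := by
  simp [rstep, pairs_length]; omega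

lemma rbuild_length (T K : ℕ → ℕ) (D : ℕ) :
    (rbuild T K D).length = ∑ d ∈ Finset.range D, (2 * T d + K d) := by
  induction D generalizing T K with
  | zero => simp [rbuild]
  | succ D ih =>
    rw [rbuild, rstep_length, ih, Finset.sum_range_succ']
    ring

lemma rbuild_sum (T K : ℕ → ℕ) (D : ℕ) :
    (rbuild T K D).sum = ∑ d ∈ Finset.range D, (T d * (2 * d + 1) + K d * (d + 1)) := by
  induction D generalizing T K with
  | zero => simp [rbuild]
  | succ D ih =>
    rw [rbuild, rstep_sum, ih, rbuild_length, Finset.sum_range_succ' _ D, ← Finset.sum_add_distrib]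
    rw [Finset.sum_congr rfl (fun x _ => show
      T (x+1) * (2*x+1) + K (x+1)*(x+1) + (2 * T (x+1) + K (x+1))
        = T (x+1) * (2*(x+1)+1) + K (x+1) * ((x+1)+1) by ring)]
    ring

lemma count_zero_pairs (t : ℕ) : (pairs t).count 0 = t := by
  induction t with
  | zero => simp [pairs]
  | succ t ih => simp [pairs, ih]

lemma count_zero_rstep (t k : ℕ) (l : List ℕ) : (rstep t k l).count 0 = t := by
  simp [rstep, List.count_append, count_zero_pairs]
  constructor
  · exact List.count_eq_zero.2 (by simp)
  · exact List.count_eq_zero.2 (by simp)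

lemma ones_append_inj {M M' : List ℕ} (hM : M ≠ [] → M[0]! ≠ 1) (hM' : M' ≠ [] → M'[0]! ≠ 1) :
    ∀ k k', List.replicate k 1 ++ M = List.replicate k' 1 ++ M' → k = k' ∧ M = M' := by
  intro k
  induction k generalizing M M' with
  | zero =>
    intro k' h
    cases k' with
    | zero => simpa using h
    | succ k' =>
      exfalso
      simp only [List.replicate_succ, List.replicate_zero, List.nil_append, List.cons_append] at h
      cases M with
      | nil => cases h
      | cons a M0 =>
        simp only [List.cons.injEq] at h
        exact hM (by simp) (by simp [h.1])
  | succ k ih =>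
    intro k' h
    cases k' with
    | zero =>
      exfalso
      simp only [List.replicate_succ, List.replicate_zero, List.nil_append, List.cons_append] at h
      cases M' with
      | nil => cases h
      | cons a M0 =>
        simp only [List.cons.injEq] at h
        exact hM' (by simp) (by simp [← h.1])
    | succ k' =>
      simp only [List.replicate_succ, List.cons_append, List.cons.injEq, true_and] at h
      obtain ⟨h1, h2⟩ := ih hM hM' k' h
      exact ⟨by omega, h2⟩

lemma rstep_inj {t k t' k' : ℕ} {l l' : List ℕ} (hl : RJ l) (hl' : RJ l')
    (h : rstep t k l = rstep t' k' l') : t = t' ∧ k = k' ∧ l = l' := by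
  have ht : t = t' := by
    have := congrArg (List.count 0) h
    rwa [count_zero_rstep, count_zero_rstep] at this
  subst ht
  have h2 : List.replicate k 1 ++ l.map (· + 1) = List.replicate k' 1 ++ l'.map (· + 1) := by
    apply List.append_cancel_left (as := pairs t)
    simpa [rstep, List.append_assoc] using h
  have hhead : ∀ (m : List ℕ), RJ m → (m.map (· + 1)) ≠ [] → (m.map (· + 1))[0]! ≠ 1 := by
    intro m hm hne
    have hmne : m ≠ [] := by simpa using hne
    have h0 : 1 ≤ m[0]! := hm.2 hmne
    have hlen : 0 < m.length := List.length_pos_iff.2 hmne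
    have : (m.map (· + 1))[0]! = m[0]! + 1 := by
      rw [getElem!_pos (m.map (· + 1)) 0 (by simpa using hlen), getElem!_pos m 0 hlen]
      simp
    omega
  obtain ⟨hk, hmap⟩ := ones_append_inj (hhead l hl) (hhead l' hl') k k' h2
  refine ⟨rfl, hk, ?_⟩
  exact List.map_injective_iff.2 (add_left_injective 1) hmap



lemma RJ_nil : RJ ([] : List ℕ) := ⟨CH_nil, by simp⟩

lemma rstep_pair (t k : ℕ) (l : List ℕ) : rstep (t + 1) k l = 1 :: 0 :: rstep t k l := by
  simp [rstep, pairs]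

lemma rstep_one (k : ℕ) (l : List ℕ) : rstep 0 (k + 1) l = 1 :: rstep 0 k l := by
  simp [rstep, pairs, List.replicate_succ]

lemma getElem!_map_sub1 (l : List ℕ) (i : ℕ) (h : i < l.length) :
    (l.map (· - 1))[i]! = l[i]! - 1 := by
  rw [getElem!_pos (l.map (· - 1)) i (by simpa using h), getElem!_pos l i h]
  simp

lemma all_pos_of_CH : ∀ (r : List ℕ), CH r → (r ≠ [] → 1 ≤ r[0]!) →
    (1 < r.length → 1 ≤ r[1]!) → ∀ x ∈ r, 1 ≤ x := by
  intro r
  induction r with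
  | nil => intro _ _ _ x hx; simp at hx
  | cons a r ih =>
    intro hc h0 h1 x hx
    have ha : 1 ≤ a := by simpa using h0 (by simp)
    rcases List.mem_cons.mp hx with rfl | hx
    · exact ha
    · rcases CH_cons.mp hc with ⟨hcr, _, _⟩
      refine ih hcr (fun hne => ?_) (fun hlen => ?_) x hx
      · have := h1 (by simp [List.length_pos_iff.mpr hne])
        simpa using this
      · have := hc.2 0 (by simp; omega)
        have e0 : (a :: r)[0]! = a := by simp
        have e2 : (a :: r)[2]! = r[1]! := by simp
        rw [e0, e2] at this
        omega

lemma peel : ∀ (n : ℕ) (r : List ℕ), r.length ≤ n → RJ r →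
    ∃ t k l, RJ l ∧ r = rstep t k l := by
  intro n
  induction n with
  | zero =>
    intro r hlen _
    have : r = [] := List.length_eq_zero_iff.mp (by omega)
    exact ⟨0, 0, [], RJ_nil, by simp [this, rstep, pairs]⟩
  | succ n ih =>
    intro r hlen hr
    rcases r with _ | ⟨a, r'⟩
    · exact ⟨0, 0, [], RJ_nil, by simp [rstep, pairs]⟩
    rcases hr with ⟨hc, hhead⟩
    have ha : 1 ≤ a := by simpa using hhead (by simp)
    rcases Nat.lt_or_ge a 2 with ha2 | ha2
    · -- a = 1
      have ha1 : a = 1 := by omega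
      subst ha1
      rcases r' with _ | ⟨b, r''⟩
      · exact ⟨0, 1, [], RJ_nil, by simp [rstep, pairs]⟩
      rcases b with _ | b
      · -- r = 1 :: 0 :: r''
        have hcr'' : CH r'' := (CH_cons.mp (CH_cons.mp hc).1).1
        have hh'' : r'' ≠ [] → 1 ≤ r''[0]! := by
          intro hne
          have := hc.2 0 (by simp [List.length_pos_iff.mpr hne])
          simpa using this
        obtain ⟨t, k, l, hl, he⟩ := ih r'' (by simp at hlen; omega) ⟨hcr'', hh''⟩
        exact ⟨t + 1, k, l, hl, by rw [rstep_pair, ← he]⟩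
      · -- r = 1 :: (b+1) :: r''
        have hcr' : CH ((b+1) :: r'') := (CH_cons.mp hc).1
        obtain ⟨t, k, l, hl, he⟩ := ih ((b+1) :: r'') (by simp at hlen ⊢; omega)
          ⟨hcr', fun _ => by simp⟩
        rcases t with _ | t
        · exact ⟨0, k + 1, l, hl, by rw [rstep_one, ← he]⟩
        · exfalso
          rw [rstep_pair] at he
          have h2 : ((1:ℕ) :: (b+1) :: r'').length > 2 := by
            have := congrArg List.length he
            simp at this ⊢
            omega
          have := hc.2 0 (by simpa using h2)
          have e0 : ((1:ℕ) :: (b+1) :: r'')[0]! = 1 := by simp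
          have hb : ((b:ℕ)+1) :: r'' = 1 :: 0 :: rstep t k l := he
          have e2 : ((1:ℕ) :: (b+1) :: r'')[2]! = 0 := by
            rw [show ((1:ℕ) :: (b+1) :: r'') = 1 :: (1 :: 0 :: rstep t k l) from by rw [← hb]]
            simp
          rw [e0, e2] at this
          omega
    · -- a ≥ 2
      have hall : ∀ x ∈ a :: r', 1 ≤ x := by
        refine all_pos_of_CH _ hc (fun _ => by simpa using ha) (fun hlen1 => ?_)
        have := hc.1 0 (by simpa using hlen1)
        have e0 : (a :: r')[0]! = a := by simp
        have e1 : (a :: r')[0 + 1]! = (a :: r')[1]! := by norm_num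
        rw [e0, e1] at this
        omega
      refine ⟨0, 0, (a :: r').map (· - 1), ⟨⟨?_, ?_⟩, ?_⟩, ?_⟩
      · intro i hi
        simp only [List.length_map] at hi
        rw [getElem!_map_sub1 _ _ (by omega), getElem!_map_sub1 _ _ (by omega)]
        have := hc.1 i (by omega)
        omega
      · intro i hi
        simp only [List.length_map] at hi
        rw [getElem!_map_sub1 _ _ (by omega), getElem!_map_sub1 _ _ (by omega)]
        have := hc.2 i (by omega)
        have hpos : 1 ≤ (a :: r')[i]! := getElem!_pos_of_all hall (by omega)
        omega
      · intro _
        rw [getElem!_map_sub1 _ _ (by simp)]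
        have e0 : (a :: r')[0]! = a := by simp
        rw [e0]; omega
      · show a :: r' = rstep 0 0 _
        simp only [rstep, pairs, List.nil_append, List.replicate_zero, List.map_map]
        rw [show ((fun x => x + 1) ∘ (fun x => x - 1)) = fun x => x - 1 + 1 from rfl]
        conv_lhs => rw [← List.map_id (a :: r')]
        exact (List.map_congr_left fun x hx => by
          have := hall x hx; simp only [id_eq]; omega).symm


lemma rbuild_congr : ∀ (D : ℕ) (T K T' K' : ℕ → ℕ),
    (∀ d < D, T d = T' d ∧ K d = K' d) → rbuild T K D = rbuild T' K' D := by
  intro D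
  induction D with
  | zero => intro _ _ _ _ _; rfl
  | succ D ih =>
    intro T K T' K' h
    show rstep (T 0) (K 0) _ = rstep (T' 0) (K' 0) _
    rw [(h 0 (by omega)).1, (h 0 (by omega)).2,
      ih (fun d => T (d+1)) (fun d => K (d+1)) (fun d => T' (d+1)) (fun d => K' (d+1))
        (fun d hd => h (d+1) (by omega))]

lemma rbuild_zero : ∀ D : ℕ, rbuild (fun _ => 0) (fun _ => 0) D = [] := by
  intro D
  induction D with
  | zero => rfl
  | succ D ih =>
    show rstep 0 0 _ = []
    rw [show (fun d => (fun _ : ℕ => (0:ℕ)) (d+1)) = (fun _ : ℕ => (0:ℕ)) from rfl]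
    rw [ih]
    simp [rstep, pairs]

lemma rbuild_stable : ∀ (D : ℕ) (T K : ℕ → ℕ), (∀ d, D ≤ d → T d = 0 ∧ K d = 0) →
    ∀ E, D ≤ E → rbuild T K E = rbuild T K D := by
  intro D
  induction D with
  | zero =>
    intro T K h E _
    rw [show rbuild T K 0 = [] from rfl, ← rbuild_zero E]
    exact rbuild_congr E _ _ _ _ (fun d _ => h d (by omega))
  | succ D ih =>
    intro T K h E hE
    rcases E with _ | E
    · omega
    show rstep (T 0) (K 0) _ = rstep (T 0) (K 0) _
    rw [ih (fun d => T (d+1)) (fun d => K (d+1)) (fun d hd => h (d+1) (by omega)) E (by omega)]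

lemma rbuild_inj : ∀ (D : ℕ) (T K T' K' : ℕ → ℕ),
    rbuild T K D = rbuild T' K' D → ∀ d < D, T d = T' d ∧ K d = K' d := by
  intro D
  induction D with
  | zero => intro _ _ _ _ _ d hd; omega
  | succ D ih =>
    intro T K T' K' h d hd
    have h' : rstep (T 0) (K 0) (rbuild (fun d => T (d+1)) (fun d => K (d+1)) D)
        = rstep (T' 0) (K' 0) (rbuild (fun d => T' (d+1)) (fun d => K' (d+1)) D) := h
    obtain ⟨h1, h2, h3⟩ := rstep_inj (RJ_rbuild _ _ _) (RJ_rbuild _ _ _) h'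
    rcases d with _ | d
    · exact ⟨h1, h2⟩
    · exact ih _ _ _ _ h3 d (by omega)

lemma sum_pos_of_RJ {r : List ℕ} (h : RJ r) (hne : r ≠ []) : 0 < r.sum := by
  rcases r with _ | ⟨a, r'⟩
  · simp at hne
  have := h.2 (by simp)
  simp only [List.getElem!_cons_zero] at this
  simp only [List.sum_cons]
  omega

lemma exists_rbuild : ∀ (n : ℕ) (r : List ℕ), r.sum ≤ n → RJ r →
    ∃ T K : ℕ → ℕ, ∃ D, (∀ d, D ≤ d → T d = 0 ∧ K d = 0) ∧ r = rbuild T K D := by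
  intro n
  induction n with
  | zero =>
    intro r hsum hr
    have : r = [] := by
      by_contra hne
      have := sum_pos_of_RJ hr hne
      omega
    exact ⟨fun _ => 0, fun _ => 0, 0, fun d _ => ⟨rfl, rfl⟩, by simp [this]; rfl⟩
  | succ n ih =>
    intro r hsum hr
    rcases eq_or_ne r [] with rfl | hne
    · exact ⟨fun _ => 0, fun _ => 0, 0, fun d _ => ⟨rfl, rfl⟩, rfl⟩
    obtain ⟨t, k, l, hl, he⟩ := peel r.length r le_rfl hr
    have hlen : 0 < r.length := List.length_pos_iff.mpr hne
    have hsl : l.sum ≤ n := by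
      have h1 := rstep_sum t k l
      have h2 := rstep_length t k l
      rw [← he] at h1 h2
      omega
    obtain ⟨T', K', D', hvan, hb⟩ := ih l hsl hl
    refine ⟨fun d => match d with | 0 => t | (d+1) => T' d,
            fun d => match d with | 0 => k | (d+1) => K' d,
            D' + 1, ?_, ?_⟩
    · intro d hd
      rcases d with _ | d
      · omega
      · exact hvan d (by omega)
    · rw [he, hb]; rfl


def wtT (T : ℕ →₀ ℕ) : ℕ := T.sum fun d c => c * (2 * d + 1)
def wtK (K : ℕ →₀ ℕ) : ℕ := K.sum fun d c => c * (d + 1)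

lemma wtT_eq_range (T : ℕ →₀ ℕ) (N : ℕ) (h : ∀ d, T d ≠ 0 → d < N) :
    wtT T = ∑ d ∈ Finset.range N, T d * (2 * d + 1) := by
  rw [wtT, Finsupp.sum_of_support_subset T
    (fun d hd => Finset.mem_range.mpr (h d (Finsupp.mem_support_iff.mp hd))) _ (by simp)]

lemma wtK_eq_range (K : ℕ →₀ ℕ) (N : ℕ) (h : ∀ d, K d ≠ 0 → d < N) :
    wtK K = ∑ d ∈ Finset.range N, K d * (d + 1) := by
  rw [wtK, Finsupp.sum_of_support_subset K
    (fun d hd => Finset.mem_range.mpr (h d (Finsupp.mem_support_iff.mp hd))) _ (by simp)]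

lemma term_le_wtT {T : ℕ →₀ ℕ} {d : ℕ} (hd : T d ≠ 0) : 2 * d + 1 ≤ wtT T := by
  have h1 : T d * (2 * d + 1) ≤ wtT T :=
    Finset.single_le_sum (f := fun i => T i * (2 * i + 1)) (fun i _ => Nat.zero_le _)
      (Finsupp.mem_support_iff.mpr hd)
  have : 1 ≤ T d := Nat.one_le_iff_ne_zero.mpr hd
  calc 2 * d + 1 = 1 * (2 * d + 1) := by ring
    _ ≤ T d * (2 * d + 1) := Nat.mul_le_mul_right _ this
    _ ≤ wtT T := h1

lemma term_le_wtK {K : ℕ →₀ ℕ} {d : ℕ} (hd : K d ≠ 0) : d + 1 ≤ wtK K := by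
  have h1 : K d * (d + 1) ≤ wtK K :=
    Finset.single_le_sum (f := fun i => K i * (i + 1)) (fun i _ => Nat.zero_le _)
      (Finsupp.mem_support_iff.mpr hd)
  have : 1 ≤ K d := Nat.one_le_iff_ne_zero.mpr hd
  calc d + 1 = 1 * (d + 1) := by ring
    _ ≤ K d * (d + 1) := Nat.mul_le_mul_right _ this
    _ ≤ wtK K := h1

/-- the set of pairs (odd-part partition, ordinary partition) of total weight `n` -/
def S (n : ℕ) : Type := {p : (ℕ →₀ ℕ) × (ℕ →₀ ℕ) // wtT p.1 + wtK p.2 = n}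

lemma rbuild_sum_of_wt {T K : ℕ →₀ ℕ} {n : ℕ} (h : wtT T + wtK K = n) :
    (rbuild T K (n + 1)).sum = n ∧ (∀ d, n + 1 ≤ d → T d = 0 ∧ K d = 0) := by
  have hT : ∀ d, T d ≠ 0 → d < n + 1 := fun d hd => by have := term_le_wtT hd; omega
  have hK : ∀ d, K d ≠ 0 → d < n + 1 := fun d hd => by have := term_le_wtK hd; omega
  constructor
  · rw [rbuild_sum, Finset.sum_add_distrib, ← wtT_eq_range T (n+1) hT, ← wtK_eq_range K (n+1) hK, h]
  · intro d hd
    constructor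
    · by_contra hc; have := hT d hc; omega
    · by_contra hc; have := hK d hc; omega

noncomputable def Phi (n : ℕ) (p : S n) : {l : List ℕ // Is01 l ∧ l.sum = n} :=
  ⟨(rbuild p.1.1 p.1.2 (n + 1)).reverse, by
    constructor
    · rw [is01_iff, List.reverse_reverse]
      exact RJ_rbuild _ _ _
    · rw [List.sum_reverse]
      exact (rbuild_sum_of_wt p.2).1⟩

lemma Phi_injective (n : ℕ) : Function.Injective (Phi n) := by
  rintro ⟨⟨T, K⟩, hp⟩ ⟨⟨T', K'⟩, hp'⟩ h
  have h1 : (rbuild T K (n+1)).reverse = (rbuild T' K' (n+1)).reverse :=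
    congrArg Subtype.val h
  have h2 : rbuild (⇑T) (⇑K) (n+1) = rbuild (⇑T') (⇑K') (n+1) := List.reverse_injective h1
  have h3 := rbuild_inj (n+1) _ _ _ _ h2
  have hvan := (rbuild_sum_of_wt hp).2
  have hvan' := (rbuild_sum_of_wt hp').2
  apply Subtype.ext
  simp only [Prod.mk.injEq]
  constructor
  · ext d
    rcases Nat.lt_or_ge d (n+1) with hd | hd
    · exact (h3 d hd).1
    · rw [(hvan d hd).1, (hvan' d hd).1]
  · ext d
    rcases Nat.lt_or_ge d (n+1) with hd | hd
    · exact (h3 d hd).2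
    · rw [(hvan d hd).2, (hvan' d hd).2]

lemma Phi_surjective (n : ℕ) : Function.Surjective (Phi n) := by
  rintro ⟨l, hIs, hsum⟩
  have hRJ : RJ l.reverse := (is01_iff l).mp hIs
  have hrsum : l.reverse.sum = n := by rw [List.sum_reverse]; exact hsum
  obtain ⟨T, K, D, hvan, hb⟩ := exists_rbuild n l.reverse (by omega) hRJ
  -- support bounds from weight
  have hsum2 : ∑ d ∈ Finset.range D, (T d * (2 * d + 1) + K d * (d + 1)) = n := by
    rw [← rbuild_sum, ← hb, hrsum]
  have hbound : ∀ d < D, (T d ≠ 0 → 2 * d + 1 ≤ n) ∧ (K d ≠ 0 → d + 1 ≤ n) := by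
    intro d hd
    have hle : T d * (2 * d + 1) + K d * (d + 1) ≤ n := by
      rw [← hsum2]
      exact Finset.single_le_sum (f := fun i => T i * (2 * i + 1) + K i * (i + 1))
        (fun i _ => Nat.zero_le _) (Finset.mem_range.mpr hd)
    constructor
    · intro h0
      have : 1 ≤ T d := Nat.one_le_iff_ne_zero.mpr h0
      nlinarith
    · intro h0
      have : 1 ≤ K d := Nat.one_le_iff_ne_zero.mpr h0
      nlinarith
  have hvan' : ∀ d, n + 1 ≤ d → T d = 0 ∧ K d = 0 := by
    intro d hd
    rcases Nat.lt_or_ge d D with h1 | h1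
    · constructor
      · by_contra hc; have := (hbound d h1).1 hc; omega
      · by_contra hc; have := (hbound d h1).2 hc; omega
    · exact hvan d h1
  set M := max D (n+1) with hM
  have hrM : l.reverse = rbuild T K M := by
    rw [hb, rbuild_stable D T K hvan M (le_max_left _ _)]
  have hrN : l.reverse = rbuild T K (n+1) := by
    rw [hrM, rbuild_stable (n+1) T K hvan' M (le_max_right _ _)]
  -- build finsupps
  have hTmem : ∀ d, T d ≠ 0 → d ∈ Finset.range (n+1) := by
    intro d hd
    rcases Nat.lt_or_ge d (n+1) with h1 | h1
    · exact Finset.mem_range.mpr h1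
    · exact absurd (hvan' d h1).1 hd
  have hKmem : ∀ d, K d ≠ 0 → d ∈ Finset.range (n+1) := by
    intro d hd
    rcases Nat.lt_or_ge d (n+1) with h1 | h1
    · exact Finset.mem_range.mpr h1
    · exact absurd (hvan' d h1).2 hd
  have hrange' : ∑ d ∈ Finset.range (n+1), (T d * (2 * d + 1) + K d * (d + 1))
      = ∑ d ∈ Finset.range D, (T d * (2 * d + 1) + K d * (d + 1)) := by
    rcases le_or_gt D (n+1) with hDn | hDn
    · apply (Finset.sum_subset (Finset.range_subset_range.mpr hDn) ?_).symm
      intro d _ hd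
      simp only [Finset.mem_range, not_lt] at hd
      rw [(hvan d hd).1, (hvan d hd).2]; ring
    · apply Finset.sum_subset (Finset.range_subset_range.mpr (by omega)) ?_
      intro d _ hd
      simp only [Finset.mem_range, not_lt] at hd
      rw [(hvan' d hd).1, (hvan' d hd).2]; ring
  have hrange := hrange'.trans hsum2
  refine ⟨⟨⟨Finsupp.onFinset (Finset.range (n+1)) T hTmem,
           Finsupp.onFinset (Finset.range (n+1)) K hKmem⟩, ?_⟩, ?_⟩
  · show wtT _ + wtK _ = n
    rw [wtT_eq_range _ (n+1) (fun d hd => by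
        simp only [Finsupp.onFinset_apply] at hd
        exact Finset.mem_range.mp (hTmem d hd)),
      wtK_eq_range _ (n+1) (fun d hd => by
        simp only [Finsupp.onFinset_apply] at hd
        exact Finset.mem_range.mp (hKmem d hd))]
    simp only [Finsupp.onFinset_apply]
    rw [← Finset.sum_add_distrib]
    exact hrange
  · apply Subtype.ext
    show (rbuild _ _ (n+1)).reverse = l
    have hco : rbuild (⇑(Finsupp.onFinset (Finset.range (n+1)) T hTmem))
        (⇑(Finsupp.onFinset (Finset.range (n+1)) K hKmem)) (n+1) = rbuild T K (n+1) := rfl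
    rw [hco, ← hrN, List.reverse_reverse]

lemma j01_eq_card_S (n : ℕ) :
    Nat.card {l : List ℕ // Is01 l ∧ l.sum = n} = Nat.card (S n) :=
  (Nat.card_congr (Equiv.ofBijective (Phi n) ⟨Phi_injective n, Phi_surjective n⟩)).symm


lemma term_le_sum (w : ℕ → ℕ) (T : ℕ →₀ ℕ) (d : ℕ) (hd : T d ≠ 0) :
    w d ≤ T.sum fun d c => c * w d := by
  have h1 : T d * w d ≤ T.sum fun d c => c * w d :=
    Finset.single_le_sum (f := fun i => T i * w i) (fun i _ => Nat.zero_le _)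
      (Finsupp.mem_support_iff.mpr hd)
  have : 1 ≤ T d := Nat.one_le_iff_ne_zero.mpr hd
  calc w d = 1 * w d := (one_mul _).symm
    _ ≤ T d * w d := Nat.mul_le_mul_right _ this
    _ ≤ _ := h1

def cntSet (w : ℕ → ℕ) (N a : ℕ) : Finset (ℕ →₀ ℕ) :=
  ((Finset.range N).finsuppAntidiag a).filter (fun μ => ∀ k ∈ Finset.range N, w k ∣ μ k)

noncomputable def eCount (w : ℕ → ℕ) (hw : ∀ d, d + 1 ≤ w d) (N a : ℕ) (ha : a < N) :
    {T : ℕ →₀ ℕ // T.sum (fun d c => c * w d) = a} ≃ {μ : ℕ →₀ ℕ // μ ∈ cntSet w N a} where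
  toFun T := ⟨Finsupp.onFinset (Finset.range N) (fun k => T.1 k * w k) (fun k hk => by
      have hk0 : T.1 k ≠ 0 := by intro h0; simp [h0] at hk
      have := term_le_sum w T.1 k hk0
      rw [T.2] at this
      have := hw k
      exact Finset.mem_range.mpr (by omega)), by
    have hsupp : ∀ k, T.1 k ≠ 0 → k ∈ Finset.range N := fun k hk0 => by
      have := term_le_sum w T.1 k hk0
      rw [T.2] at this
      have := hw k
      exact Finset.mem_range.mpr (by omega)
    simp only [cntSet, Finset.mem_filter, Finset.mem_finsuppAntidiag]
    refine ⟨⟨?_, Finsupp.support_onFinset_subset⟩, fun k _ => by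
      simp only [Finsupp.onFinset_apply]; exact dvd_mul_left _ _⟩
    rw [Finsupp.coe_onFinset]
    have hs := Finsupp.sum_of_support_subset T.1
      (fun k hk => hsupp k (Finsupp.mem_support_iff.mp hk)) (fun d c => c * w d) (by simp)
    rw [← hs]
    exact T.2⟩
  invFun μ := ⟨Finsupp.onFinset (Finset.range N) (fun k => μ.1 k / w k) (fun k hk => by
      have hμ := μ.2
      simp only [cntSet, Finset.mem_filter, Finset.mem_finsuppAntidiag] at hμ
      have hk0 : μ.1 k ≠ 0 := by
        intro h0; simp [h0] at hk
      exact hμ.1.2 (Finsupp.mem_support_iff.mpr hk0)), by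
    have hμ := μ.2
    simp only [cntSet, Finset.mem_filter, Finset.mem_finsuppAntidiag] at hμ
    rw [Finsupp.sum_of_support_subset _ Finsupp.support_onFinset_subset _ (by simp)]
    simp only [Finsupp.onFinset_apply]
    rw [Finset.sum_congr rfl (fun k hk => Nat.div_mul_cancel (hμ.2 k hk))]
    exact hμ.1.1⟩
  left_inv T := by
    apply Subtype.ext
    ext k
    simp only [Finsupp.onFinset_apply]
    exact Nat.mul_div_cancel _ (by have := hw k; omega)
  right_inv μ := by
    have hμ := μ.2
    simp only [cntSet, Finset.mem_filter, Finset.mem_finsuppAntidiag] at hμ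
    apply Subtype.ext
    ext k
    simp only [Finsupp.onFinset_apply]
    by_cases hk : k ∈ Finset.range N
    · exact Nat.div_mul_cancel (hμ.2 k hk)
    · have : μ.1 k = 0 := by
        by_contra h0
        exact hk (hμ.1.2 (Finsupp.mem_support_iff.mpr h0))
      simp [this]

lemma card_count (w : ℕ → ℕ) (hw : ∀ d, d + 1 ≤ w d) (N a : ℕ) (ha : a < N) :
    Nat.card {T : ℕ →₀ ℕ // T.sum (fun d c => c * w d) = a} = (cntSet w N a).card := by
  rw [Nat.card_congr (eCount w hw N a ha)]
  exact Nat.card_eq_finsetCard _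

lemma finite_count (w : ℕ → ℕ) (hw : ∀ d, d + 1 ≤ w d) (a : ℕ) :
    Finite {T : ℕ →₀ ℕ // T.sum (fun d c => c * w d) = a} :=
  Finite.of_equiv _ (eCount w hw (a+1) a (by omega)).symm

noncomputable def geom (c : ℕ) : PowerSeries ℤ := PowerSeries.mk fun m => if c ∣ m then 1 else 0

lemma geom_inv (c : ℕ) (hc : 0 < c) : (1 - (PowerSeries.X : PowerSeries ℤ) ^ c) * geom c = 1 := by
  ext m
  rw [sub_mul, one_mul, map_sub, PowerSeries.coeff_X_pow_mul', PowerSeries.coeff_one]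
  simp only [geom, PowerSeries.coeff_mk]
  rcases Nat.eq_zero_or_pos m with rfl | hm
  · have h1 : ¬ c ≤ 0 := by omega
    simp [h1]
  · have : ¬ m = 0 := by omega
    simp only [this, if_false]
    by_cases hcm : c ≤ m
    · simp only [hcm, if_true]
      have : c ∣ m ↔ c ∣ m - c := by
        constructor
        · intro h; exact (Nat.dvd_sub h dvd_rfl)
        · intro h; have := Nat.dvd_add h dvd_rfl; rwa [Nat.sub_add_cancel hcm] at this
      by_cases hd : c ∣ m
      · simp [hd, this.mp hd]
      · have h2 : ¬ c ∣ m - c := fun h => hd (this.mpr h)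
        simp [hd, h2]
    · simp only [hcm, if_false]
      have : ¬ c ∣ m := by
        intro h
        rcases h with ⟨e, rfl⟩
        rcases Nat.eq_zero_or_pos e with rfl | he
        · omega
        · nlinarith
      simp [this]

lemma coeff_prod_geom (w : ℕ → ℕ) (N a : ℕ) (ha : a < N) :
    (PowerSeries.coeff (R := ℤ) a) (∏ k ∈ Finset.range N, geom (w k)) = ((cntSet w N a).card : ℤ) := by
  rw [PowerSeries.coeff_prod]
  rw [Finset.sum_congr rfl (fun μ _ => show
      ∏ k ∈ Finset.range N, (PowerSeries.coeff (R := ℤ) (μ k)) (geom (w k))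
        = if (∀ k ∈ Finset.range N, w k ∣ μ k) then (1:ℤ) else 0 from by
    simp only [geom, PowerSeries.coeff_mk]
    exact Finset.prod_boole)]
  rw [Finset.sum_boole]
  rfl

lemma finite_wtK (b : ℕ) : Finite {K : ℕ →₀ ℕ // wtK K = b} :=
  finite_count (fun d => d + 1) (fun _ => le_rfl) b

lemma finite_wtT (a : ℕ) : Finite {T : ℕ →₀ ℕ // wtT T = a} :=
  finite_count (fun d => 2 * d + 1) (fun d => by show d + 1 ≤ 2 * d + 1; omega) a

lemma card_S (n : ℕ) :
    Nat.card (S n) = ∑ p ∈ Finset.HasAntidiagonal.antidiagonal n,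
      Nat.card {K : ℕ →₀ ℕ // wtK K = p.1} * Nat.card {T : ℕ →₀ ℕ // wtT T = p.2} := by
  have e : S n ≃ Σ p : {p : ℕ × ℕ // p ∈ Finset.HasAntidiagonal.antidiagonal n},
      ({K : ℕ →₀ ℕ // wtK K = p.1.1} × {T : ℕ →₀ ℕ // wtT T = p.1.2}) :=
  { toFun := fun q => ⟨⟨(wtK q.1.2, wtT q.1.1), by
        rw [Finset.HasAntidiagonal.mem_antidiagonal]; have := q.2; omega⟩,
      ⟨q.1.2, rfl⟩, ⟨q.1.1, rfl⟩⟩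
    invFun := fun x => ⟨(x.2.2.1, x.2.1.1), by
        have h1 := x.2.1.2; have h2 := x.2.2.2
        have h3 := Finset.HasAntidiagonal.mem_antidiagonal.mp x.1.2
        show wtT _ + wtK _ = n
        rw [h2, h1]; omega⟩
    left_inv := fun q => by
      apply Subtype.ext
      exact Prod.mk.eta
    right_inv := fun x => by
      rcases x with ⟨⟨⟨a, b⟩, hab⟩, ⟨K, hK⟩, ⟨T, hT⟩⟩
      have hK' : wtK K = a := hK
      have hT' : wtT T = b := hT
      subst hK'; subst hT'
      rfl }
  rw [Nat.card_congr e]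
  haveI : ∀ b, Finite {K : ℕ →₀ ℕ // wtK K = b} := finite_wtK
  haveI : ∀ a, Finite {T : ℕ →₀ ℕ // wtT T = a} := finite_wtT
  haveI : ∀ p : {p : ℕ × ℕ // p ∈ Finset.HasAntidiagonal.antidiagonal n},
      Fintype ({K : ℕ →₀ ℕ // wtK K = p.1.1} × {T : ℕ →₀ ℕ // wtT T = p.1.2}) :=
    fun p => Fintype.ofFinite _
  rw [Nat.card_eq_fintype_card, Fintype.card_sigma]
  rw [← Finset.sum_coe_sort (Finset.HasAntidiagonal.antidiagonal n)
    (fun p => Nat.card {K : ℕ →₀ ℕ // wtK K = p.1} * Nat.card {T : ℕ →₀ ℕ // wtT T = p.2})]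
  apply Finset.sum_congr rfl
  intro p _
  rw [← Nat.card_eq_fintype_card, Nat.card_prod]

lemma card_wtK (N b : ℕ) (hb : b < N) :
    Nat.card {K : ℕ →₀ ℕ // wtK K = b} = (cntSet (fun d => d + 1) N b).card :=
  card_count (fun d => d + 1) (fun _ => le_rfl) N b hb

lemma card_wtT (N a : ℕ) (ha : a < N) :
    Nat.card {T : ℕ →₀ ℕ // wtT T = a} = (cntSet (fun d => 2 * d + 1) N a).card :=
  card_count (fun d => 2 * d + 1) (fun d => by show d + 1 ≤ 2 * d + 1; omega) N a ha

lemma coeff_GG {n N : ℕ} (hn : n < N) :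
    PowerSeries.coeff (R := ℤ) n ((∏ k ∈ Finset.range N, geom (k + 1)) *
        ∏ k ∈ Finset.range N, geom (2 * k + 1))
      = (Nat.card (S n) : ℤ) := by
  rw [PowerSeries.coeff_mul, card_S]
  push_cast
  apply Finset.sum_congr rfl
  intro p hp
  have hmem := Finset.HasAntidiagonal.mem_antidiagonal.mp hp
  have h1 : p.1 < N := by omega
  have h2 : p.2 < N := by omega
  rw [coeff_prod_geom (fun k => k + 1) N p.1 h1, coeff_prod_geom (fun k => 2 * k + 1) N p.2 h2]
  rw [card_wtK N p.1 h1, card_wtT N p.2 h2]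

open PowerSeries in
lemma coeff_eq_of_dvd {N : ℕ} {f g : PowerSeries ℤ}
    (h : (PowerSeries.X : PowerSeries ℤ) ^ N ∣ f - g) {m : ℕ} (hm : m < N) :
    PowerSeries.coeff (R := ℤ) m f = PowerSeries.coeff (R := ℤ) m g := by
  have := (PowerSeries.X_pow_dvd_iff.mp h) m hm
  rw [map_sub, sub_eq_zero] at this
  exact this

lemma tail_dvd (N : ℕ) (M : ℕ) : (PowerSeries.X : PowerSeries ℤ) ^ N ∣
    ((∏ i ∈ Finset.range M, (1 - (PowerSeries.X : PowerSeries ℤ) ^ (N + i + 1))) - 1) := by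
  induction M with
  | zero => simp
  | succ M ih =>
    rw [Finset.prod_range_succ]
    have he : (∏ i ∈ Finset.range M, (1 - (PowerSeries.X : PowerSeries ℤ) ^ (N + i + 1)))
          * (1 - (PowerSeries.X : PowerSeries ℤ) ^ (N + M + 1)) - 1
        = ((∏ i ∈ Finset.range M, (1 - (PowerSeries.X : PowerSeries ℤ) ^ (N + i + 1))) - 1)
            * (1 - (PowerSeries.X : PowerSeries ℤ) ^ (N + M + 1))
          - (PowerSeries.X : PowerSeries ℤ) ^ (N + M + 1) := by ring
    rw [he]
    exact dvd_sub (ih.mul_right _) (pow_dvd_pow _ (by omega))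

lemma prod_split (N : ℕ) :
    (∏ k ∈ Finset.range N, (1 - (PowerSeries.X : PowerSeries ℤ) ^ (2 * k + 2)))
      * (∏ k ∈ Finset.range N, (1 - (PowerSeries.X : PowerSeries ℤ) ^ (2 * k + 1)))
    = ∏ j ∈ Finset.range (2 * N), (1 - (PowerSeries.X : PowerSeries ℤ) ^ (j + 1)) := by
  induction N with
  | zero => simp
  | succ N ih =>
    rw [Finset.prod_range_succ, Finset.prod_range_succ,
      show 2 * (N + 1) = (2 * N + 1) + 1 by ring, Finset.prod_range_succ,
      Finset.prod_range_succ, ← ih,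
      show 2 * N + 1 + 1 = 2 * N + 2 by ring]
    ring

theorem jagged_genFun' (n : ℕ) :
    PowerSeries.coeff (R := ℤ) n
        ((∏ k ∈ Finset.range (n + 1), (1 - (PowerSeries.X : PowerSeries ℤ) ^ (k + 1))) *
          PowerSeries.mk fun m => (j01 m : ℤ))
      = PowerSeries.coeff (R := ℤ) n
        (∏ k ∈ Finset.range (n + 1), (1 + (PowerSeries.X : PowerSeries ℤ) ^ (k + 1))) := by
  set N := n + 1 with hN
  set A : PowerSeries ℤ := ∏ k ∈ Finset.range N, (1 - (PowerSeries.X : PowerSeries ℤ) ^ (k + 1)) with hA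
  set B : PowerSeries ℤ := ∏ k ∈ Finset.range N, (1 + (PowerSeries.X : PowerSeries ℤ) ^ (k + 1)) with hB
  set Ao : PowerSeries ℤ := ∏ k ∈ Finset.range N, (1 - (PowerSeries.X : PowerSeries ℤ) ^ (2 * k + 1)) with hAo
  set G1 : PowerSeries ℤ := ∏ k ∈ Finset.range N, geom (k + 1) with hG1
  set G2 : PowerSeries ℤ := ∏ k ∈ Finset.range N, geom (2 * k + 1) with hG2
  set J : PowerSeries ℤ := PowerSeries.mk fun m => (j01 m : ℤ) with hJ
  have h1 : A * G1 = 1 := by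
    rw [hA, hG1, ← Finset.prod_mul_distrib]
    exact Finset.prod_eq_one fun k _ => geom_inv (k + 1) (by omega)
  have h2 : Ao * G2 = 1 := by
    rw [hAo, hG2, ← Finset.prod_mul_distrib]
    exact Finset.prod_eq_one fun k _ => geom_inv (2 * k + 1) (by omega)
  have h3 : (PowerSeries.X : PowerSeries ℤ) ^ N ∣ J - G1 * G2 := by
    rw [PowerSeries.X_pow_dvd_iff]
    intro m hm
    rw [map_sub, sub_eq_zero, hJ, PowerSeries.coeff_mk, j01, j01_eq_card_S, hG1, hG2]
    exact (coeff_GG hm).symm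
  have hAB : A * B = ∏ k ∈ Finset.range N, (1 - (PowerSeries.X : PowerSeries ℤ) ^ (2 * k + 2)) := by
    rw [hA, hB, ← Finset.prod_mul_distrib]
    apply Finset.prod_congr rfl
    intro k _
    have : ((PowerSeries.X : PowerSeries ℤ) ^ (k + 1)) ^ 2
        = (PowerSeries.X : PowerSeries ℤ) ^ (2 * k + 2) := by
      rw [← pow_mul]
      congr 1
      ring
    calc (1 - (PowerSeries.X : PowerSeries ℤ) ^ (k + 1)) * (1 + (PowerSeries.X : PowerSeries ℤ) ^ (k + 1))
        = 1 - ((PowerSeries.X : PowerSeries ℤ) ^ (k + 1)) ^ 2 := by ring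
      _ = 1 - (PowerSeries.X : PowerSeries ℤ) ^ (2 * k + 2) := by rw [this]
  have h4 : A * (B * Ao) = A * ∏ i ∈ Finset.range N, (1 - (PowerSeries.X : PowerSeries ℤ) ^ (N + i + 1)) := by
    rw [← mul_assoc, hAB, prod_split]
    rw [show 2 * N = N + N by ring, Finset.prod_range_add]
  have hA0 : A ≠ 0 := by
    intro h0
    have : PowerSeries.constantCoeff (R := ℤ) A = 1 := by
      rw [hA, map_prod]
      apply Finset.prod_eq_one
      intro k _
      rw [map_sub, map_one, map_pow, PowerSeries.constantCoeff_X]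
      simp
    rw [h0, map_zero] at this
    exact one_ne_zero this.symm
  have h5 : (PowerSeries.X : PowerSeries ℤ) ^ N ∣ B * Ao - 1 := by
    have hc := mul_left_cancel₀ hA0 h4
    rw [hc]
    exact tail_dvd N N
  have e1 : PowerSeries.coeff (R := ℤ) n (A * J) = PowerSeries.coeff (R := ℤ) n G2 := by
    have hd : (PowerSeries.X : PowerSeries ℤ) ^ N ∣ A * J - A * (G1 * G2) := by
      rw [← mul_sub]
      exact h3.mul_left A
    rw [coeff_eq_of_dvd hd (by omega)]
    rw [← mul_assoc, h1, one_mul]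
  have e2 : PowerSeries.coeff (R := ℤ) n B = PowerSeries.coeff (R := ℤ) n G2 := by
    have hd : (PowerSeries.X : PowerSeries ℤ) ^ N ∣ B * (Ao * G2) - 1 * G2 := by
      rw [← mul_assoc]
      have : B * Ao * G2 - 1 * G2 = (B * Ao - 1) * G2 := by ring
      rw [this]
      exact h5.mul_right G2
    have := coeff_eq_of_dvd hd (show n < N by omega)
    rw [h2, mul_one, one_mul] at this
    exact this
  rw [e1, e2]
end Jag

/-- Generating function: `∑ j(n) qⁿ = ∏_{k≥1} (1+qᵏ)/(1-qᵏ)`, stated coefficient-wise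
(factors with exponent `> n` do not affect the coefficient of `qⁿ`). -/
theorem jagged_genFun (n : ℕ) :
    PowerSeries.coeff (R := ℤ) n
        ((∏ k ∈ Finset.range (n + 1), (1 - (PowerSeries.X : PowerSeries ℤ) ^ (k + 1))) *
          PowerSeries.mk fun m => (j01 m : ℤ))
      = PowerSeries.coeff (R := ℤ) n
        (∏ k ∈ Finset.range (n + 1), (1 + (PowerSeries.X : PowerSeries ℤ) ^ (k + 1))) := by
  exact Jag.jagged_genFun' n
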